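/- Let ω be an invertible antisymmetric real n×n matrix and α an antisymmetric real n×n matrix. Let T_p (p ≥ 1) be defined by T_1 = (1/2)·α and T_p = (1/2)·Σ_{l=1}^{p-1} T_l ⋄ T_{p-l} for p ≥ 2, and let V_p (p ≥ 0) be defined by V_0 = -ω and V_p = Σ_{l=1}^{p} T_l ⋄ V_{p-l} for p ≥ 1. Then for every p ≥ 1, Σ_{l=0}^{p} V_l ⋄ V_{p-l} = α^{⋄p}. -/

import Mathlib

open Matrix

/-- Covariant diamond contraction: `(α ⋄ β) = αᵀ * ω⁻¹ * β`. -/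
noncomputable def diamondCov {n : ℕ} (ω α β : Matrix (Fin n) (Fin n) ℝ) :
    Matrix (Fin n) (Fin n) ℝ :=
  αᵀ * ω⁻¹ * β

/-- Diamond powers: `α^{⋄1} = α`, `α^{⋄(k+1)} = α ⋄ α^{⋄k}`. -/
noncomputable def diamondPow {n : ℕ} (ω α : Matrix (Fin n) (Fin n) ℝ) :
    ℕ → Matrix (Fin n) (Fin n) ℝ
  | 0 => 1
  | 1 => α
  | (k + 2) => diamondCov ω α (diamondPow ω α (k + 1))

/-- Scalar coefficients for `T`. -/
noncomputable def tauC : ℕ → ℝ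
  | 0 => 0
  | 1 => 1/2
  | (p+2) => (1/2) * ∑ l ∈ (Finset.Ico 1 (p+2)).attach, tauC l.1 * tauC (p + 2 - l.1)
  decreasing_by
  · exact (Finset.mem_Ico.mp l.2).2
  · have h := Finset.mem_Ico.mp l.2; omega

/-- Scalar coefficients for `V`. -/
noncomputable def nuC : ℕ → ℝ
  | 0 => 1
  | (p+1) => ∑ l ∈ (Finset.Icc 1 (p+1)).attach, tauC l.1 * nuC (p + 1 - l.1)
  decreasing_by
  have h := Finset.mem_Icc.mp l.2; omega

lemma tauC_zero : tauC 0 = 0 := by simp [tauC]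

lemma tauC_one : tauC 1 = 1/2 := by simp [tauC]

lemma nuC_zero : nuC 0 = 1 := by simp [nuC]

lemma tauC_rec (p : ℕ) :
    tauC (p+2) = (1/2) * ∑ l ∈ Finset.Ico 1 (p+2), tauC l * tauC (p + 2 - l) := by
  rw [tauC, ← Finset.sum_attach (Finset.Ico 1 (p+2)) (fun l => tauC l * tauC (p + 2 - l))]

lemma nuC_rec (p : ℕ) :
    nuC (p+1) = ∑ l ∈ Finset.Icc 1 (p+1), tauC l * nuC (p + 1 - l) := by
  rw [nuC, ← Finset.sum_attach (Finset.Icc 1 (p+1)) (fun l => tauC l * nuC (p + 1 - l))]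

open PowerSeries in
lemma nuC_conv (p : ℕ) : ∑ l ∈ Finset.range (p + 1), nuC l * nuC (p - l) = 1 := by
  classical
  set t : ℝ⟦X⟧ := PowerSeries.mk tauC with ht
  set v : ℝ⟦X⟧ := PowerSeries.mk nuC with hv
  have hmul : ∀ (f g : ℕ → ℝ) (m : ℕ),
      PowerSeries.coeff m (PowerSeries.mk f * PowerSeries.mk g)
        = ∑ l ∈ Finset.range (m + 1), f l * g (m - l) := by
    intro f g m
    rw [PowerSeries.coeff_mul, Finset.Nat.sum_antidiagonal_eq_sum_range_succ_mk]
    simp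
  -- (1 - t) * v = 1
  have hA : (1 - t) * v = 1 := by
    ext m
    rw [sub_mul, one_mul, map_sub, hv, ht, hmul]
    cases m with
    | zero => simp [nuC_zero, tauC_zero]
    | succ m =>
      rw [Finset.sum_range_succ']
      have h0 : tauC 0 * nuC (m + 1 - 0) = 0 := by simp [tauC_zero]
      rw [h0, add_zero]
      have key : ∑ i ∈ Finset.range (m + 1), tauC (i + 1) * nuC (m + 1 - (i + 1))
          = nuC (m + 1) := by
        rw [nuC_rec]
        rw [show Finset.Icc 1 (m+1) = Finset.Ico 1 (m+2) from (Finset.Ico_add_one_right_eq_Icc 1 (m+1)).symm]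
        rw [Finset.sum_Ico_eq_sum_range]
        apply Finset.sum_congr (by norm_num)
        intro i _
        rw [add_comm 1 i]
      rw [key]
      simp [PowerSeries.coeff_one]
  -- 2t - t² = X
  have hB : 2 * t - t * t = (PowerSeries.X : ℝ⟦X⟧) := by
    ext m
    have h2 : PowerSeries.coeff m (2 * t) = 2 * tauC m := by
      rw [two_mul, map_add, ht]
      simp [PowerSeries.coeff_mk]
      ring
    rw [map_sub, h2, ht, hmul, PowerSeries.coeff_X]
    match m with
    | 0 => simp [tauC_zero]
    | 1 => norm_num [Finset.sum_range_succ, tauC_zero, tauC_one]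
    | (p+2) =>
      rw [Finset.sum_range_succ, Finset.sum_range_succ']
      have hl : tauC (p+2) * tauC (p + 2 - (p + 2)) = 0 := by simp [tauC_zero]
      have h0 : tauC 0 * tauC (p + 2 - 0) = 0 := by simp [tauC_zero]
      rw [hl, h0, add_zero, add_zero]
      have key : ∑ i ∈ Finset.range (p + 1), tauC (i + 1) * tauC (p + 2 - (i + 1))
          = ∑ l ∈ Finset.Ico 1 (p+2), tauC l * tauC (p + 2 - l) := by
        rw [Finset.sum_Ico_eq_sum_range]
        apply Finset.sum_congr (by norm_num)
        intro i _
        rw [add_comm 1 i]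
      rw [key, tauC_rec, if_neg (by omega)]
      ring
  have hB' : (1 - t)^2 = 1 - (PowerSeries.X : ℝ⟦X⟧) := by
    rw [← hB]; ring
  have hvv : v * v * (1 - (PowerSeries.X : ℝ⟦X⟧)) = 1 := by
    have h : v * v * (1 - (PowerSeries.X : ℝ⟦X⟧)) = ((1 - t) * v)^2 := by
      rw [← hB']; ring
    rw [h, hA, one_pow]
  -- extract coefficients
  have hS : ∀ m, PowerSeries.coeff m (v * v) = 1 := by
    intro m
    induction m with
    | zero =>
      have h := congrArg (PowerSeries.coeff 0) hvv
      rw [mul_sub, mul_one, map_sub, PowerSeries.coeff_zero_mul_X] at h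
      simpa using h
    | succ k ih =>
      have h := congrArg (PowerSeries.coeff (k+1)) hvv
      rw [mul_sub, mul_one, map_sub, PowerSeries.coeff_succ_mul_X, ih] at h
      have h1 : PowerSeries.coeff (k+1) (1 : ℝ⟦X⟧) = 0 := by
        simp [PowerSeries.coeff_one]
      rw [h1] at h
      linarith
  have h := hS p
  rw [hv, hmul] at h
  exact h

theorem V_convolution_eq_diamondPow {n : ℕ} (ω α : Matrix (Fin n) (Fin n) ℝ)
    (hω : IsUnit ω.det) (hωskew : ωᵀ = -ω) (hα : αᵀ = -α)
    (T V : ℕ → Matrix (Fin n) (Fin n) ℝ)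
    (hT1 : T 1 = (1/2 : ℝ) • α)
    (hTrec : ∀ p : ℕ, 2 ≤ p →
      T p = (1/2 : ℝ) • ∑ l ∈ Finset.Ico 1 p, diamondCov ω (T l) (T (p - l)))
    (hV0 : V 0 = -ω)
    (hVrec : ∀ p : ℕ, 1 ≤ p →
      V p = ∑ l ∈ Finset.Icc 1 p, diamondCov ω (T l) (V (p - l))) :
    ∀ p : ℕ, 1 ≤ p →
      ∑ l ∈ Finset.range (p + 1), diamondCov ω (V l) (V (p - l)) = diamondPow ω α p := by
  classical
  set a : Matrix (Fin n) (Fin n) ℝ := -(ω⁻¹ * α) with ha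
  have hinv1 : ω * ω⁻¹ = 1 := mul_nonsing_inv ω hω
  have hinv2 : ω⁻¹ * ω = 1 := nonsing_inv_mul ω hω
  have hc1 : ∀ X : Matrix (Fin n) (Fin n) ℝ, ω⁻¹ * (ω * X) = X := by
    intro X; rw [← mul_assoc, hinv2, one_mul]
  have hωinvT : (ω⁻¹)ᵀ = -ω⁻¹ := by
    rw [transpose_nonsing_inv, hωskew]
    exact inv_eq_right_inv (by rw [neg_mul_neg, hinv1])
  have hωa : ω * a = -α := by
    rw [ha, mul_neg, ← mul_assoc, hinv1, one_mul]
  have haT : ∀ k : ℕ, (a ^ k)ᵀ = ω * a ^ k * ω⁻¹ := by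
    intro k
    induction k with
    | zero => simp [hinv1]
    | succ k ih =>
      have haT1 : aᵀ = -(α * ω⁻¹) := by
        rw [ha, transpose_neg, transpose_mul, hωinvT, hα]
        simp
      rw [pow_succ, transpose_mul, haT1, ih]
      rw [show a ^ k * a = a * a ^ k from by rw [← pow_succ, pow_succ']]
      rw [← mul_assoc ω a, hωa]
      simp only [neg_mul, mul_neg, mul_assoc, hc1]
  have hMT : ∀ k : ℕ, (ω * a ^ k)ᵀ = -(ω * a ^ k) := by
    intro k
    rw [transpose_mul, haT k, hωskew, mul_neg, mul_assoc, hinv2, mul_one]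
  have hdia : ∀ (k m : ℕ) (c d : ℝ),
      diamondCov ω (c • (ω * a ^ k)) (d • (ω * a ^ m))
        = (-(c * d)) • (ω * a ^ (k + m)) := by
    intro k m c d
    unfold diamondCov
    rw [transpose_smul, hMT k]
    rw [Matrix.smul_mul, Matrix.smul_mul, Matrix.mul_smul, smul_smul]
    have h : (-(ω * a ^ k)) * ω⁻¹ * (ω * a ^ m) = -(ω * a ^ (k + m)) := by
      rw [neg_mul, neg_mul, mul_assoc (ω * a ^ k), hc1, mul_assoc, ← pow_add]
    rw [h, smul_neg, ← neg_smul]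
  have hT : ∀ p : ℕ, 1 ≤ p → T p = (-(tauC p)) • (ω * a ^ p) := by
    intro p
    induction p using Nat.strong_induction_on with
    | _ p ih =>
      intro hp
      obtain _ | q := p
      · omega
      obtain _ | q := q
      · rw [hT1, pow_one, hωa, tauC_one, neg_smul, smul_neg, neg_neg]
      · have hsum : ∑ l ∈ Finset.Ico 1 (q+2), diamondCov ω (T l) (T (q + 2 - l))
            = ∑ l ∈ Finset.Ico 1 (q+2),
                (-(-tauC l * -tauC (q + 2 - l))) • (ω * a ^ (q+2)) :=
          Finset.sum_congr rfl (fun l hl => by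
            obtain ⟨h1, h2⟩ := Finset.mem_Ico.mp hl
            rw [ih l (by omega) h1, ih (q + 2 - l) (by omega) (by omega),
              hdia l (q+2-l) (-(tauC l)) (-(tauC (q+2-l))),
              show l + (q + 2 - l) = q + 2 by omega])
        have hs2 : ∑ l ∈ Finset.Ico 1 (q+2), -(-tauC l * -tauC (q + 2 - l))
            = -∑ l ∈ Finset.Ico 1 (q+2), tauC l * tauC (q + 2 - l) := by
          rw [← Finset.sum_neg_distrib]
          exact Finset.sum_congr rfl (fun l _ => by ring)
        rw [hTrec (q+2) (by omega), hsum, ← Finset.sum_smul, smul_smul, tauC_rec, hs2]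
        congr 1
        ring
  have hV : ∀ p : ℕ, V p = (-(nuC p)) • (ω * a ^ p) := by
    intro p
    induction p using Nat.strong_induction_on with
    | _ p ih =>
      obtain _ | q := p
      · rw [hV0, nuC_zero]; simp
      · have hsum : ∑ l ∈ Finset.Icc 1 (q+1), diamondCov ω (T l) (V (q + 1 - l))
            = ∑ l ∈ Finset.Icc 1 (q+1),
                (-(-tauC l * -nuC (q + 1 - l))) • (ω * a ^ (q+1)) :=
          Finset.sum_congr rfl (fun l hl => by
            obtain ⟨h1, h2⟩ := Finset.mem_Icc.mp hl
            rw [hT l h1, ih (q + 1 - l) (by omega),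
              hdia l (q+1-l) (-(tauC l)) (-(nuC (q+1-l))),
              show l + (q + 1 - l) = q + 1 by omega])
        have hs2 : ∑ l ∈ Finset.Icc 1 (q+1), -(-tauC l * -nuC (q + 1 - l))
            = -∑ l ∈ Finset.Icc 1 (q+1), tauC l * nuC (q + 1 - l) := by
          rw [← Finset.sum_neg_distrib]
          exact Finset.sum_congr rfl (fun l _ => by ring)
        rw [hVrec (q+1) (by omega), hsum, ← Finset.sum_smul, nuC_rec, hs2]
  have hPow : ∀ p : ℕ, 1 ≤ p → diamondPow ω α p = (-(1:ℝ)) • (ω * a ^ p) := by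
    intro p
    induction p with
    | zero => omega
    | succ k ihk =>
      intro _
      obtain _ | m := k
      · rw [show diamondPow ω α 1 = α from rfl, pow_one, hωa]
        simp
      · rw [show diamondPow ω α (m+2) = diamondCov ω α (diamondPow ω α (m+1)) from rfl]
        rw [ihk (by omega)]
        rw [show α = (-(1:ℝ)) • (ω * a ^ 1) from by rw [pow_one, hωa]; simp]
        rw [hdia 1 (m+1) (-(1:ℝ)) (-(1:ℝ)), show 1 + (m + 1) = m + 1 + 1 from by omega]
        norm_num
  intro p hp
  have hsum : ∑ l ∈ Finset.range (p + 1), diamondCov ω (V l) (V (p - l))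
      = ∑ l ∈ Finset.range (p + 1), (-(-nuC l * -nuC (p - l))) • (ω * a ^ p) :=
    Finset.sum_congr rfl (fun l hl => by
      have h2 : l ≤ p := by
        have := Finset.mem_range.mp hl; omega
      rw [hV l, hV (p - l), hdia l (p-l) (-(nuC l)) (-(nuC (p-l))),
        show l + (p - l) = p by omega])
  have hs2 : ∑ l ∈ Finset.range (p + 1), -(-nuC l * -nuC (p - l))
      = -∑ l ∈ Finset.range (p + 1), nuC l * nuC (p - l) := by
    rw [← Finset.sum_neg_distrib]
    exact Finset.sum_congr rfl (fun l _ => by ring)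
  rw [hsum, ← Finset.sum_smul, hs2, nuC_conv, hPow p hp]
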